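/- Every root is either positive or negative: Φ = Φ⁺ ⊎ Φ⁻ (disjoint union). -/

import Mathlib

open Real

variable {V : Type*} [AddCommGroup V] [Module ℝ V]

/-- The set of positive linear combinations of a set `A`. -/
def PLC (A : Set V) : Set V :=
  {v | ∃ (s : Finset V) (c : V → ℝ), (↑s : Set V) ⊆ A ∧ (∀ x ∈ s, 0 ≤ c x) ∧
    (∃ x ∈ s, 0 < c x) ∧ v = ∑ x ∈ s, c x • x}

/-- A Coxeter datum (Krammer): a root basis `Pi` in `V` with bilinear form `B`. -/
structure CoxeterDatum (V : Type*) [AddCommGroup V] [Module ℝ V] where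
  B : LinearMap.BilinForm ℝ V
  Pi : Set V
  norm_one : ∀ a ∈ Pi, B a a = 1
  symm : ∀ a ∈ Pi, ∀ b ∈ Pi, B a b = B b a
  offdiag : ∀ a ∈ Pi, ∀ b ∈ Pi, a ≠ b →
    (∃ m : ℕ, 2 ≤ m ∧ B a b = -Real.cos (Real.pi / m)) ∨ B a b ≤ -1
  zero_not_plc : (0 : V) ∉ PLC Pi

namespace CoxeterDatum

variable (D : CoxeterDatum V)

/-- The reflection in the vector `a`, as a linear endomorphism of `V`. -/
noncomputable def refl (a : V) : Module.End ℝ V where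
  toFun x := x - (2 * D.B x a) • a
  map_add' x y := by simp only [map_add, LinearMap.add_apply]; module
  map_smul' c x := by simp only [map_smul, LinearMap.smul_apply, smul_eq_mul,
    RingHom.id_apply]; module

/-- The set of simple reflections, as invertible endomorphisms of `V`. -/
def simples : Set (Module.End ℝ V)ˣ :=
  {u | ∃ a ∈ D.Pi, (u : Module.End ℝ V) = D.refl a}

/-- The Coxeter group `W`, realized as the group generated by the simple reflections. -/
noncomputable def Wgrp : Subgroup (Module.End ℝ V)ˣ := Subgroup.closure D.simples

/-- The root system. -/
def roots : Set V :=
  {x | ∃ w ∈ D.Wgrp, ∃ a ∈ D.Pi, x = (w : Module.End ℝ V) a}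

/-- The positive roots. -/
def posRoots : Set V := D.roots ∩ PLC D.Pi

/-- The negative roots. -/
def negRoots : Set V := {x | -x ∈ D.posRoots}

/-- The length of an element of `W` with respect to the simple reflections. -/
noncomputable def len (w : (Module.End ℝ V)ˣ) : ℕ :=
  sInf {n | ∃ l : List (Module.End ℝ V)ˣ,
    l.length = n ∧ (∀ u ∈ l, u ∈ D.simples) ∧ l.prod = w}

/-- The depth of a root. -/
noncomputable def dp (x : V) : ℕ :=
  sInf {n | ∃ w ∈ D.Wgrp, D.len w = n ∧ (w : Module.End ℝ V) x ∈ D.negRoots}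

/-- Dominance: `x` dominates `y` if every `w ∈ W` making `x` negative makes `y` negative. -/
def dom (x y : V) : Prop :=
  ∀ w ∈ D.Wgrp, (w : Module.End ℝ V) x ∈ D.negRoots → (w : Module.End ℝ V) y ∈ D.negRoots

/-- `D(x)`: the set of positive roots other than `x` dominated by `x`. -/
def DSet (x : V) : Set V := {y | y ∈ D.posRoots ∧ y ≠ x ∧ D.dom x y}

/-- `D_n`: the set of positive roots dominating exactly `n` other positive roots. -/
def Dn (n : ℕ) : Set V :=
  {x | x ∈ D.posRoots ∧ (D.DSet x).Finite ∧ (D.DSet x).ncard = n}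

/-- The set of reflections of `W`. -/
def TSet : Set (Module.End ℝ V)ˣ :=
  {t | ∃ w ∈ D.Wgrp, ∃ s ∈ D.simples, t = w * s * w⁻¹}

/-- `N(w)`: the set of positive roots sent to negative roots by `w`. -/
def NSet (w : (Module.End ℝ V)ˣ) : Set V :=
  {z | z ∈ D.posRoots ∧ (w : Module.End ℝ V) z ∈ D.negRoots}

/-- `N̄(w)`: the reflections `t` with `ℓ(wt) < ℓ(w)`. -/
def Nbar (w : (Module.End ℝ V)ˣ) : Set (Module.End ℝ V)ˣ :=
  {t | t ∈ D.TSet ∧ D.len (w * t) < D.len w}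

/-- The canonical generators of a reflection subgroup `W'`. -/
def canGens (W' : Subgroup (Module.End ℝ V)ˣ) : Set (Module.End ℝ V)ˣ :=
  {t | t ∈ D.TSet ∧ D.Nbar t ∩ (W' : Set (Module.End ℝ V)ˣ) = {t}}

/-- `S(x)`: elements of `W` of minimal length sending `x` into `Π` (inverse-wise). -/
def SSet (x : V) : Set (Module.End ℝ V)ˣ :=
  {w | w ∈ D.Wgrp ∧ D.len w = D.dp x - 1 ∧ ((w⁻¹ : (Module.End ℝ V)ˣ) : Module.End ℝ V) x ∈ D.Pi}

end CoxeterDatum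


section Words
variable {G : Type*} [Group G] (S : Set G)

/-- length with respect to a generating set -/
noncomputable def glen (w : G) : ℕ :=
  sInf {n | ∃ l : List G, (∀ u ∈ l, u ∈ S) ∧ l.prod = w ∧ l.length = n}

variable {S}

lemma inv_eq_self' (hS : ∀ u ∈ S, u * u = 1) {u : G} (hu : u ∈ S) : u⁻¹ = u := by
  exact inv_eq_of_mul_eq_one_right (hS u hu)

lemma word_mem_closure {l : List G} (hl : ∀ u ∈ l, u ∈ S) :
    l.prod ∈ Subgroup.closure S :=
  Subgroup.list_prod_mem _ (fun u hu => Subgroup.subset_closure (hl u hu))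

lemma rev_prod (hS : ∀ u ∈ S, u * u = 1) :
    ∀ l : List G, (∀ u ∈ l, u ∈ S) → l.reverse.prod = l.prod⁻¹ := by
  intro l
  induction l with
  | nil => simp
  | cons x l ih =>
    intro h
    simp only [List.reverse_cons, List.prod_append, List.prod_cons, List.prod_nil,
      mul_one, mul_inv_rev]
    rw [ih (fun u hu => h u (List.mem_cons_of_mem _ hu)),
      inv_eq_self' hS (h x List.mem_cons_self)]

lemma exists_word (hS : ∀ u ∈ S, u * u = 1) {w : G} (hw : w ∈ Subgroup.closure S) :
    ∃ l : List G, (∀ u ∈ l, u ∈ S) ∧ l.prod = w := by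
  induction hw using Subgroup.closure_induction with
  | mem x hx => exact ⟨[x], by simpa using hx, by simp⟩
  | one => exact ⟨[], by simp, by simp⟩
  | mul x y hx hy ihx ihy =>
    obtain ⟨l1, h1, p1⟩ := ihx
    obtain ⟨l2, h2, p2⟩ := ihy
    exact ⟨l1 ++ l2, by intro u hu; rcases List.mem_append.1 hu with h|h; exacts [h1 u h, h2 u h],
      by simp [p1, p2]⟩
  | inv x hx ihx =>
    obtain ⟨l, h1, p1⟩ := ihx
    exact ⟨l.reverse, by intro u hu; exact h1 u (List.mem_reverse.1 hu),
      by rw [rev_prod hS l h1, p1]⟩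

end Words
section Glen
variable {G : Type*} [Group G] {S : Set G} (hS : ∀ u ∈ S, u * u = 1)
include hS

lemma glen_set_nonempty {w : G} (hw : w ∈ Subgroup.closure S) :
    {n | ∃ l : List G, (∀ u ∈ l, u ∈ S) ∧ l.prod = w ∧ l.length = n}.Nonempty := by
  obtain ⟨l, h1, h2⟩ := exists_word hS hw
  exact ⟨l.length, l, h1, h2, rfl⟩

lemma glen_spec {w : G} (hw : w ∈ Subgroup.closure S) :
    ∃ l : List G, (∀ u ∈ l, u ∈ S) ∧ l.prod = w ∧ l.length = glen S w :=
  Nat.sInf_mem (glen_set_nonempty hS hw)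

omit hS in
lemma glen_le {w : G} {l : List G} (h1 : ∀ u ∈ l, u ∈ S) (h2 : l.prod = w) :
    glen S w ≤ l.length :=
  Nat.sInf_le ⟨l, h1, h2, rfl⟩

omit hS in
lemma glen_one : glen S (1 : G) = 0 :=
  Nat.le_antisymm (glen_le (l := []) (by simp) (by simp)) (Nat.zero_le _)

lemma eq_one_of_glen_zero {w : G} (hw : w ∈ Subgroup.closure S) (h : glen S w = 0) :
    w = 1 := by
  obtain ⟨l, _, h2, h3⟩ := glen_spec hS hw
  rw [h] at h3
  rw [← h2, List.length_eq_zero_iff.1 h3, List.prod_nil]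

lemma glen_mul_le {w v : G} (hw : w ∈ Subgroup.closure S) (hv : v ∈ Subgroup.closure S) :
    glen S (w * v) ≤ glen S w + glen S v := by
  obtain ⟨l1, a1, a2, a3⟩ := glen_spec hS hw
  obtain ⟨l2, b1, b2, b3⟩ := glen_spec hS hv
  calc glen S (w * v) ≤ (l1 ++ l2).length := glen_le
        (by intro u hu; rcases List.mem_append.1 hu with h|h; exacts [a1 u h, b1 u h])
        (by simp [a2, b2])
    _ = _ := by simp [a3, b3]

lemma glen_mul_single_le {w s : G} (hw : w ∈ Subgroup.closure S) (hs : s ∈ S) :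
    glen S (w * s) ≤ glen S w + 1 := by
  obtain ⟨l, a1, a2, a3⟩ := glen_spec hS hw
  calc glen S (w * s) ≤ (l ++ [s]).length := glen_le
        (by intro u hu; rcases List.mem_append.1 hu with h|h;
            exacts [a1 u h, by simpa using (List.mem_singleton.1 h ▸ hs)])
        (by simp [a2])
    _ = glen S w + 1 := by simp [a3]

lemma glen_single_mul_le {w s : G} (hw : w ∈ Subgroup.closure S) (hs : s ∈ S) :
    glen S (s * w) ≤ glen S w + 1 := by
  obtain ⟨l, a1, a2, a3⟩ := glen_spec hS hw
  calc glen S (s * w) ≤ (s :: l).length := glen_le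
        (by intro u hu; rcases List.mem_cons.1 hu with h|h; exacts [h ▸ hs, a1 u h])
        (by simp [a2])
    _ = glen S w + 1 := by simp [a3]

lemma glen_le_mul_single {w s : G} (hw : w ∈ Subgroup.closure S) (hs : s ∈ S) :
    glen S w ≤ glen S (w * s) + 1 := by
  have h1 : w * s ∈ Subgroup.closure S := mul_mem hw (Subgroup.subset_closure hs)
  have : w * s * s = w := by rw [mul_assoc, hS s hs, mul_one]
  calc glen S w = glen S (w * s * s) := by rw [this]
    _ ≤ glen S (w * s) + 1 := glen_mul_single_le hS h1 hs

/-- every nontrivial element has a right-shortening generator -/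
lemma exists_shorten {w : G} (hw : w ∈ Subgroup.closure S) (hne : w ≠ 1) :
    ∃ s ∈ S, glen S (w * s) < glen S w := by
  obtain ⟨l, a1, a2, a3⟩ := glen_spec hS hw
  have hl : l ≠ [] := by
    rintro rfl
    exact hne (by simp [← a2])
  obtain rfl | ⟨l', s, rfl⟩ := l.eq_nil_or_concat'
  · exact absurd rfl hl
  have hs : s ∈ S := a1 s (by simp)
  refine ⟨s, hs, ?_⟩
  have hws : w * s = l'.prod := by
    rw [← a2]; simp [mul_assoc, hS s hs]
  have h1 : glen S (w * s) ≤ l'.length := glen_le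
    (fun u hu => a1 u (by simp [hu])) hws.symm
  have h2 : l'.length < (l' ++ [s]).length := by simp
  omega



omit hS in
lemma glen_anti {S' : Set G} (hsub : S ⊆ S') (hS' : ∀ u ∈ S', u * u = 1)
    {w : G} (hw : w ∈ Subgroup.closure S) : glen S' w ≤ glen S w := by
  obtain ⟨l, a1, a2, a3⟩ := glen_spec (fun u hu => hS' u (hsub hu)) hw
  rw [← a3]
  exact glen_le (fun u hu => hsub (a1 u hu)) a2

end Glen
section Alt
variable {G : Type*} [Group G]

def altG (x y : G) : ℕ → G
  | 0 => 1
  | (k+1) => (if Odd (k+1) then y else x) * altG x y k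

@[simp] lemma altG_zero (x y : G) : altG x y 0 = 1 := rfl

lemma altG_succ (x y : G) (k : ℕ) :
    altG x y (k+1) = (if Odd (k+1) then y else x) * altG x y k := rfl

lemma altG_word (x y : G) (k : ℕ) :
    ∃ l : List G, (∀ u ∈ l, u = x ∨ u = y) ∧ l.prod = altG x y k ∧ l.length = k := by
  induction k with
  | zero => exact ⟨[], by simp, by simp, rfl⟩
  | succ k ih =>
    obtain ⟨l, h1, h2, h3⟩ := ih
    refine ⟨(if Odd (k+1) then y else x) :: l, ?_, by simp [altG_succ, h2], by simp [h3]⟩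
    intro u hu
    rcases List.mem_cons.1 hu with h | h
    · subst h; split <;> simp
    · exact h1 u h

lemma odd_succ_of_even {k : ℕ} (hk : Even k) : Odd (k+1) := by
  rw [Nat.odd_iff]; rw [Nat.even_iff] at hk; omega

lemma not_odd_succ_of_odd {k : ℕ} (hk : Odd k) : ¬ Odd (k+1) := by
  rw [Nat.odd_iff]; rw [Nat.odd_iff] at hk; omega

variable {x y : G} (hx : x * x = 1) (hy : y * y = 1)

include hx hy in
lemma alt_step (z : G) (hz : z = x ∨ z = y) (k : ℕ) :
    ∃ k' ≤ k + 1, z * altG x y k = altG x y k' ∨ z * altG x y k = altG y x k' := by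
  rcases Nat.even_or_odd k with hk | hk
  · -- k even, top letter of (k+1) is y
    have h1 : altG x y (k+1) = y * altG x y k := by
      rw [altG_succ, if_pos (odd_succ_of_even hk)]
    rcases hz with hz | hz
    · rcases Nat.eq_zero_or_pos k with rfl | hpos
      · refine ⟨1, by omega, Or.inr ?_⟩
        rw [altG_succ, if_pos (by norm_num)]; simp [hz]
      · obtain ⟨j, rfl⟩ : ∃ j, k = j + 1 := ⟨k-1, by omega⟩
        have hj : Odd j := by rw [Nat.odd_iff]; rw [Nat.even_iff] at hk; omega
        have h2 : altG x y (j+1) = x * altG x y j := by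
          rw [altG_succ, if_neg (not_odd_succ_of_odd hj)]
        exact ⟨j, by omega, Or.inl (by rw [hz, h2, ← mul_assoc, hx, one_mul])⟩
    · exact ⟨k+1, le_rfl, Or.inl (by rw [hz, h1])⟩
  · -- k odd, top letter of (k+1) is x
    have h1 : altG x y (k+1) = x * altG x y k := by
      rw [altG_succ, if_neg (not_odd_succ_of_odd hk)]
    rcases hz with hz | hz
    · exact ⟨k+1, le_rfl, Or.inl (by rw [hz, h1])⟩
    · obtain ⟨j, rfl⟩ : ∃ j, k = j + 1 := ⟨k-1, by rcases hk with ⟨i, hi⟩; omega⟩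
      have hj : Even j := by rw [Nat.even_iff]; rw [Nat.odd_iff] at hk; omega
      have h2 : altG x y (j+1) = y * altG x y j := by
        rw [altG_succ, if_pos (odd_succ_of_even hj)]
      exact ⟨j, by omega, Or.inl (by rw [hz, h2, ← mul_assoc, hy, one_mul])⟩

include hx hy in
lemma alt_classify : ∀ l : List G, (∀ u ∈ l, u = x ∨ u = y) →
    ∃ k ≤ l.length, l.prod = altG x y k ∨ l.prod = altG y x k := by
  intro l
  induction l with
  | nil => exact fun _ => ⟨0, le_rfl, Or.inl (by simp)⟩
  | cons z l ih =>
    intro h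
    obtain ⟨k, hk, hc⟩ := ih (fun u hu => h u (List.mem_cons_of_mem _ hu))
    have hz := h z (List.mem_cons_self)
    rw [List.prod_cons]
    rcases hc with hc | hc
    · obtain ⟨k', hk', h'⟩ := alt_step hx hy z hz k
      exact ⟨k', by simpa using le_trans hk' (by omega), by rw [hc]; exact h'⟩
    · obtain ⟨k', hk', h'⟩ := alt_step hy hx z (hz.elim Or.inr Or.inl) k
      exact ⟨k', by simpa using le_trans hk' (by omega), by rw [hc]; exact h'.symm⟩

lemma alt_succ_right (x y : G) : ∀ k, altG x y (k+1) = altG y x k * y := by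
  intro k
  induction k with
  | zero => rw [altG_succ, if_pos (by norm_num)]; simp
  | succ k ih =>
    rw [altG_succ, ih, altG_succ (x := y)]
    rcases Nat.even_or_odd k with hk | hk
    · have h1 : ¬ Odd (k+1+1) := by rw [Nat.odd_iff]; rw [Nat.even_iff] at hk; omega
      have h2 : Odd (k+1) := by rw [Nat.odd_iff]; rw [Nat.even_iff] at hk; omega
      rw [if_neg h1, if_pos h2, mul_assoc]
    · have h1 : Odd (k+1+1) := by rw [Nat.odd_iff]; rw [Nat.odd_iff] at hk; omega
      have h2 : ¬ Odd (k+1) := by rw [Nat.odd_iff]; rw [Nat.odd_iff] at hk; omega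
      rw [if_pos h1, if_neg h2, mul_assoc]

lemma alt_add (x y : G) (k : ℕ) : ∀ j,
    altG x y (j + k) = (if Even k then altG x y j else altG y x j) * altG x y k := by
  intro j
  induction j with
  | zero => split <;> simp
  | succ j ih =>
    have hh : j + 1 + k = (j + k) + 1 := by omega
    rw [hh, altG_succ, ih]
    rcases Nat.even_or_odd k with hk | hk
    · rw [if_pos hk, if_pos hk, altG_succ]
      have h0 : Odd (j + k + 1) ↔ Odd (j + 1) := by
        rw [Nat.odd_iff, Nat.odd_iff]; rw [Nat.even_iff] at hk; omega
      by_cases hj : Odd (j+1)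
      · rw [if_pos (h0.mpr hj), if_pos hj, mul_assoc]
      · rw [if_neg (fun hc => hj (h0.mp hc)), if_neg hj, mul_assoc]
    · have hek : ¬ Even k := by rw [Nat.even_iff]; rw [Nat.odd_iff] at hk; omega
      rw [if_neg hek, if_neg hek, altG_succ (x := y)]
      have h0 : Odd (j + k + 1) ↔ ¬ Odd (j + 1) := by
        rw [Nat.odd_iff, Nat.odd_iff]; rw [Nat.odd_iff] at hk; omega
      by_cases hj : Odd (j+1)
      · rw [if_neg (fun hc => (h0.mp hc) hj), if_pos hj, mul_assoc]
      · rw [if_pos (h0.mpr hj), if_neg hj, mul_assoc]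

lemma alt_two_mul (x y : G) : ∀ i, altG x y (2*i) = (x*y)^i := by
  intro i
  induction i with
  | zero => simp
  | succ i ih =>
    have h2 : 2*(i+1) = (2*i+1)+1 := by omega
    rw [h2, altG_succ, altG_succ,
      if_neg (by rw [Nat.odd_iff]; omega), if_pos (by rw [Nat.odd_iff]; omega), ih,
      pow_succ']
    rw [mul_assoc]

lemma alt_two_mul_add_one (x y : G) (i : ℕ) : altG x y (2*i+1) = y * (x*y)^i := by
  rw [altG_succ, if_pos (by rw [Nat.odd_iff]; omega), alt_two_mul]

include hx hy in
lemma alt_braid {m : ℕ} (hm : (x*y)^m = 1) : altG x y m = altG y x m := by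
  have hyx : (y*x) = (x*y)⁻¹ := by
    rw [mul_inv_rev, inv_eq_of_mul_eq_one_right hx, inv_eq_of_mul_eq_one_right hy]
  rcases Nat.even_or_odd m with ⟨i, hi⟩ | ⟨i, hi⟩
  · have hm2 : m = 2*i := by omega
    subst hm2
    rw [alt_two_mul, alt_two_mul, hyx, inv_pow]
    rw [two_mul, pow_add] at hm
    exact eq_inv_of_mul_eq_one_left hm
  · have hm2 : m = 2*i+1 := by omega
    subst hm2
    rw [alt_two_mul_add_one, alt_two_mul_add_one, hyx, inv_pow]
    have h1 : (x*y) * (x*y)^(2*i) = 1 := by rw [← pow_succ']; exact hm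
    have h2 : (x*y)^(2*i) = y * x := by
      rw [hyx]; exact (inv_eq_of_mul_eq_one_right h1).symm
    have h3 : y * (x*y)^i * (x*y)^i = x := by
      rw [mul_assoc, ← pow_add]
      have h4 : i + i = 2*i := by omega
      rw [h4, h2, ← mul_assoc, hy, one_mul]
    rw [eq_mul_inv_iff_mul_eq]; exact h3

end Alt
section PLCfacts
variable {V : Type*} [AddCommGroup V] [Module ℝ V]

lemma mem_PLC_of_mem {A : Set V} {a : V} (ha : a ∈ A) : a ∈ PLC A := by
  refine ⟨{a}, fun _ => 1, by simpa using ha, by simp, ⟨a, by simp⟩, by simp⟩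

lemma smul_mem_PLC {A : Set V} {v : V} {r : ℝ} (hr : 0 < r) (hv : v ∈ PLC A) :
    r • v ∈ PLC A := by
  obtain ⟨s, c, h1, h2, ⟨z, hz, hz2⟩, h4⟩ := hv
  refine ⟨s, fun x => r * c x, h1, fun x hx => mul_nonneg hr.le (h2 x hx),
    ⟨z, hz, mul_pos hr hz2⟩, ?_⟩
  rw [h4, Finset.smul_sum]
  exact Finset.sum_congr rfl (fun x _ => by rw [mul_smul])

lemma add_mem_PLC {A : Set V} {v w : V} (hv : v ∈ PLC A) (hw : w ∈ PLC A) :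
    v + w ∈ PLC A := by
  classical
  obtain ⟨s, c, h1, h2, ⟨z, hz, hz2⟩, h4⟩ := hv
  obtain ⟨s', c', h1', h2', _, h4'⟩ := hw
  refine ⟨s ∪ s', fun x => (if x ∈ s then c x else 0) + (if x ∈ s' then c' x else 0),
    ?_, ?_, ⟨z, Finset.mem_union_left _ hz, ?_⟩, ?_⟩
  · intro x hx
    rcases Finset.mem_union.1 (by simpa using hx) with h | h
    exacts [h1 h, h1' h]
  · intro x _
    have : (0:ℝ) ≤ if x ∈ s then c x else 0 := by split; exacts [h2 x ‹_›, le_rfl]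
    have : (0:ℝ) ≤ if x ∈ s' then c' x else 0 := by split; exacts [h2' x ‹_›, le_rfl]
    positivity
  · have e1 : (if z ∈ s then c z else 0) = c z := if_pos hz
    have e2 : (0:ℝ) ≤ if z ∈ s' then c' z else 0 := by split; exacts [h2' z ‹_›, le_rfl]
    simp only []; rw [e1]; linarith
  · have key : ∀ (t : Finset V) (d : V → ℝ), t ⊆ s ∪ s' →
        (∑ x ∈ s ∪ s', (if x ∈ t then d x else 0) • x) = ∑ x ∈ t, d x • x := by
      intro t d ht
      rw [← Finset.sum_subset ht (fun x _ hx => by rw [if_neg hx, zero_smul])]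
      exact Finset.sum_congr rfl (fun x hx => by rw [if_pos hx])
    rw [h4, h4']
    have : ∀ x ∈ s ∪ s',
        ((if x ∈ s then c x else 0) + (if x ∈ s' then c' x else 0)) • x
        = (if x ∈ s then c x else 0) • x + (if x ∈ s' then c' x else 0) • x :=
      fun x _ => add_smul _ _ _
    rw [Finset.sum_congr rfl this, Finset.sum_add_distrib,
      key s c Finset.subset_union_left, key s' c' Finset.subset_union_right]

lemma combo_mem_PLC {A : Set V} {v w : V} {p q : ℝ} (hp : 0 ≤ p) (hq : 0 ≤ q)
    (hpq : 0 < p + q) (hv : v ∈ PLC A) (hw : w ∈ PLC A) : p • v + q • w ∈ PLC A := by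
  rcases eq_or_lt_of_le hp with hp0 | hp0
  · have hq0 : 0 < q := by linarith
    simpa [← hp0] using smul_mem_PLC hq0 hw
  rcases eq_or_lt_of_le hq with hq0 | hq0
  · simpa [← hq0] using smul_mem_PLC hp0 hv
  exact add_mem_PLC (smul_mem_PLC hp0 hv) (smul_mem_PLC hq0 hw)

end PLCfacts


namespace CoxeterDatum
variable (D : CoxeterDatum V)

lemma refl_apply (a x : V) : D.refl a x = x - (2 * D.B x a) • a := rfl

lemma refl_sq {a : V} (h : D.B a a = 1) : D.refl a * D.refl a = 1 := by
  ext x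
  rw [Module.End.mul_apply, Module.End.one_apply]
  simp only [refl_apply, map_sub, map_smul, LinearMap.sub_apply, LinearMap.smul_apply,
    smul_eq_mul, h]
  module

noncomputable def su (a : V) (h : D.B a a = 1) : (Module.End ℝ V)ˣ :=
  ⟨D.refl a, D.refl a, D.refl_sq h, D.refl_sq h⟩

@[simp] lemma su_val (a : V) (h : D.B a a = 1) : (D.su a h : Module.End ℝ V) = D.refl a := rfl

lemma su_mem {a : V} (ha : a ∈ D.Pi) (h : D.B a a = 1) : D.su a h ∈ D.simples := ⟨a, ha, rfl⟩

lemma su_sq (a : V) (h : D.B a a = 1) : D.su a h * D.su a h = 1 :=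
  Units.ext (by rw [Units.val_mul, su_val]; exact D.refl_sq h)

lemma su_apply (a : V) (h : D.B a a = 1) (x : V) :
    (D.su a h : Module.End ℝ V) x = x - (2 * D.B x a) • a := rfl

lemma su_apply_self (a : V) (h : D.B a a = 1) :
    (D.su a h : Module.End ℝ V) a = -a := by
  rw [su_apply, h]; module

lemma simples_sq : ∀ u ∈ D.simples, u * u = 1 := by
  rintro u ⟨a, ha, hu⟩
  exact Units.ext (by rw [Units.val_mul, hu]; exact D.refl_sq (D.norm_one a ha))

lemma simples_eq_su {u : (Module.End ℝ V)ˣ} (hu : u ∈ D.simples) :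
    ∃ a, ∃ ha : a ∈ D.Pi, u = D.su a (D.norm_one a ha) := by
  obtain ⟨a, ha, hval⟩ := hu
  exact ⟨a, ha, Units.ext hval⟩

end CoxeterDatum


section TrigFacts
open Real

lemma sin_prod_identity (A B T : ℝ) :
    Real.sin A * Real.sin B - Real.sin (A - T) * Real.sin (B - T)
      = Real.sin (A + B - T) * Real.sin T := by
  have h := Real.sin_sq_add_cos_sq T
  simp only [Real.sin_sub, Real.sin_add, Real.cos_add, Real.cos_sub]
  linear_combination (-(Real.sin A * Real.sin B)) * h

lemma cos_diff_identity (X T : ℝ) :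
    Real.cos (X - T) - Real.cos (X + T) = 2 * Real.sin X * Real.sin T := by
  rw [Real.cos_sub, Real.cos_add]; ring

noncomputable def sg (m : ℕ) (k : ℤ) : ℝ :=
  Real.sin (k * (Real.pi / m)) / Real.sin (Real.pi / m)

variable {m : ℕ} (hm : 2 ≤ m)

include hm

lemma theta_pos : 0 < Real.pi / m := by
  apply div_pos Real.pi_pos
  exact_mod_cast Nat.lt_of_lt_of_le Nat.zero_lt_two hm

lemma theta_le : Real.pi / m ≤ Real.pi / 2 := by
  apply div_le_div_of_nonneg_left Real.pi_pos.le two_pos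
  exact_mod_cast hm

lemma theta_lt_pi : Real.pi / m < Real.pi :=
  lt_of_le_of_lt (theta_le hm) (by linarith [Real.pi_pos])

lemma sin_theta_pos : 0 < Real.sin (Real.pi / m) :=
  Real.sin_pos_of_pos_of_lt_pi (theta_pos hm) (theta_lt_pi hm)

lemma m_theta : (m : ℝ) * (Real.pi / m) = Real.pi := by
  field_simp

omit hm in
lemma sg_zero : sg m 0 = 0 := by simp [sg]

lemma sg_one : sg m 1 = 1 := by
  rw [sg]
  push_cast
  rw [one_mul, div_self (sin_theta_pos hm).ne']

lemma sg_neg_one : sg m (-1) = -1 := by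
  rw [sg]
  push_cast
  rw [neg_one_mul, Real.sin_neg, neg_div, div_self (sin_theta_pos hm).ne']

lemma sg_two : sg m 2 = 2 * Real.cos (Real.pi / m) := by
  rw [sg, show ((2:ℤ):ℝ) * (Real.pi / m) = 2 * (Real.pi/m) by push_cast; ring,
    Real.sin_two_mul]
  field_simp [(sin_theta_pos hm).ne']

lemma sg_three : sg m 3 = 4 * (Real.cos (Real.pi / m))^2 - 1 := by
  have h := Real.sin_sq_add_cos_sq (Real.pi / m)
  rw [sg, show ((3:ℤ):ℝ) * (Real.pi / m) = 3 * (Real.pi/m) by push_cast; ring,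
    Real.sin_three_mul, div_eq_iff (sin_theta_pos hm).ne']
  linear_combination (-(4*Real.sin (Real.pi/m))) * h

lemma sg_id (p q : ℤ) : sg m p * sg m q - sg m (p-1) * sg m (q-1) = sg m (p+q-1) := by
  have hs := (sin_theta_pos hm).ne'
  unfold sg
  rw [div_mul_div_comm, div_mul_div_comm, div_sub_div_same,
    show ((p-1:ℤ):ℝ) * (Real.pi/m) = (p:ℝ)*(Real.pi/m) - (Real.pi/m) by push_cast; ring,
    show ((q-1:ℤ):ℝ) * (Real.pi/m) = (q:ℝ)*(Real.pi/m) - (Real.pi/m) by push_cast; ring,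
    show ((p:ℤ):ℝ) * (Real.pi/m) = (p:ℝ)*(Real.pi/m) by push_cast; ring,
    show ((q:ℤ):ℝ) * (Real.pi/m) = (q:ℝ)*(Real.pi/m) by push_cast; ring,
    sin_prod_identity,
    show ((p+q-1:ℤ):ℝ) * (Real.pi/m) = ((p:ℝ)*(Real.pi/m) + (q:ℝ)*(Real.pi/m) - (Real.pi/m)) by push_cast; ring]
  rw [mul_comm (Real.sin _) (Real.sin (Real.pi/m)), ← div_div]
  rw [mul_div_assoc, mul_div_cancel_left₀ _ hs]

lemma sg_rec (k : ℤ) : sg m (k+1) = 2 * Real.cos (Real.pi / m) * sg m k - sg m (k-1) := by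
  have h := sg_id hm k 2
  norm_num at h
  rw [sg_two hm, sg_one hm, mul_one] at h
  have e : k+2-1 = k+1 := by ring
  rw [e] at h
  linarith [h]

lemma sg_2m : sg m (2*m) = 0 := by
  have hmne : (m:ℝ) ≠ 0 := by
    have : 0 < (m:ℝ) := by exact_mod_cast Nat.lt_of_lt_of_le Nat.zero_lt_two hm
    exact this.ne'
  rw [sg]
  push_cast
  rw [show (2*(m:ℝ)) * (Real.pi/m) = 2*Real.pi by field_simp]
  simp [Real.sin_two_pi]

lemma sg_2m_add_one : sg m (2*m+1) = 1 := by
  rw [sg]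
  push_cast
  rw [show (2*(m:ℝ)+1) * (Real.pi/m) = 2*Real.pi + Real.pi/m by field_simp,
    Real.sin_add, Real.sin_two_pi, Real.cos_two_pi]
  simp [div_self (sin_theta_pos hm).ne']

lemma sg_2m_sub_one : sg m (2*m-1) = -1 := by
  rw [sg]
  push_cast
  rw [show (2*(m:ℝ)-1) * (Real.pi/m) = 2*Real.pi - Real.pi/m by field_simp,
    Real.sin_sub, Real.sin_two_pi, Real.cos_two_pi]
  simp only [zero_mul, one_mul, zero_sub]
  rw [neg_div, div_self (sin_theta_pos hm).ne']

lemma sg_nat_nonneg (k : ℕ) (hk : k ≤ m) : 0 ≤ sg m k := by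
  have ht := theta_pos hm
  apply div_nonneg _ (sin_theta_pos hm).le
  apply Real.sin_nonneg_of_nonneg_of_le_pi
  · positivity
  · push_cast
    calc (k:ℝ) * (Real.pi/m) ≤ (m:ℝ) * (Real.pi/m) := by
          apply mul_le_mul_of_nonneg_right _ ht.le
          exact_mod_cast hk
      _ = Real.pi := m_theta hm

lemma sg_nat_pos (k : ℕ) (h1 : 1 ≤ k) (hk : k < m) : 0 < sg m k := by
  have ht := theta_pos hm
  apply div_pos _ (sin_theta_pos hm)
  apply Real.sin_pos_of_pos_of_lt_pi
  · push_cast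
    have : (1:ℝ) ≤ (k:ℝ) := by exact_mod_cast h1
    nlinarith
  · push_cast
    calc (k:ℝ) * (Real.pi/m) < (m:ℝ) * (Real.pi/m) := by
          apply mul_lt_mul_of_pos_right _ ht
          exact_mod_cast hk
      _ = Real.pi := m_theta hm

lemma sum_sg (d : ℤ)
    (hd : Real.cos ((d:ℝ) * (Real.pi/m)) = Real.cos ((2*(m:ℝ)+(d:ℝ)) * (Real.pi/m))) :
    ∑ j ∈ Finset.range m, sg m (2*j+1+d) = 0 := by
  have hs := sin_theta_pos hm
  set θ := Real.pi / m with hθ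
  have key : ∀ j : ℕ, Real.cos ((2*(j:ℝ)+(d:ℝ))*θ) - Real.cos ((2*((j:ℝ)+1)+(d:ℝ))*θ)
      = 2 * Real.sin ((2*(j:ℝ)+1+(d:ℝ))*θ) * Real.sin θ := by
    intro j
    rw [show (2*(j:ℝ)+(d:ℝ))*θ = (2*(j:ℝ)+1+(d:ℝ))*θ - θ by ring,
      show (2*((j:ℝ)+1)+(d:ℝ))*θ = (2*(j:ℝ)+1+(d:ℝ))*θ + θ by ring,
      cos_diff_identity]
  have tele := Finset.sum_range_sub' (f := fun j : ℕ => Real.cos ((2*(j:ℝ)+(d:ℝ))*θ)) m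
  have sum_eq : ∑ j ∈ Finset.range m, 2 * Real.sin ((2*(j:ℝ)+1+(d:ℝ))*θ) * Real.sin θ = 0 := by
    rw [← Finset.sum_congr rfl (fun j _ => key j)]
    calc ∑ j ∈ Finset.range m,
          (Real.cos ((2*(j:ℝ)+(d:ℝ))*θ) - Real.cos ((2*((j:ℝ)+1)+(d:ℝ))*θ))
        = ∑ j ∈ Finset.range m,
          ((fun i : ℕ => Real.cos ((2*(i:ℝ)+(d:ℝ))*θ)) j
            - (fun i : ℕ => Real.cos ((2*(i:ℝ)+(d:ℝ))*θ)) (j+1)) := by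
          apply Finset.sum_congr rfl
          intro j _
          push_cast
          ring_nf
      _ = Real.cos ((2*(0:ℝ)+(d:ℝ))*θ) - Real.cos ((2*(m:ℝ)+(d:ℝ))*θ) := by
          rw [tele]; push_cast; ring_nf
      _ = 0 := by
          rw [show (2*(0:ℝ)+(d:ℝ))*θ = (d:ℝ)*θ by ring, hd]
          ring
  have sin_sum : ∑ j ∈ Finset.range m, Real.sin ((2*(j:ℝ)+1+(d:ℝ))*θ) = 0 := by
    have h2 : (∑ j ∈ Finset.range m, Real.sin ((2*(j:ℝ)+1+(d:ℝ))*θ)) * (2 * Real.sin θ) = 0 := by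
      rw [Finset.sum_mul]
      rw [← sum_eq]
      apply Finset.sum_congr rfl
      intro j _
      ring
    rcases mul_eq_zero.1 h2 with h | h
    · exact h
    · exfalso; nlinarith
  calc ∑ j ∈ Finset.range m, sg m (2*j+1+d)
      = ∑ j ∈ Finset.range m, Real.sin ((2*(j:ℝ)+1+(d:ℝ))*θ) / Real.sin θ := by
        apply Finset.sum_congr rfl
        intro j _
        rw [sg]
        congr 1
        push_cast
        ring
    _ = (∑ j ∈ Finset.range m, Real.sin ((2*(j:ℝ)+1+(d:ℝ))*θ)) / Real.sin θ := by
        rw [Finset.sum_div]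
    _ = 0 := by rw [sin_sum, zero_div]

lemma sum_sg_odd : ∑ j ∈ Finset.range m, sg m (2*j+1) = 0 := by
  have h := sum_sg hm 0 (by
    push_cast
    rw [zero_mul, add_zero, show (2*(m:ℝ)) * (Real.pi/m) = 2*Real.pi by field_simp]
    simp [Real.cos_two_pi])
  simpa using h

lemma sum_sg_even : ∑ j ∈ Finset.range m, sg m (2*j) = 0 := by
  have h := sum_sg hm (-1) (by
    push_cast
    rw [show (-1:ℝ) * (Real.pi/m) = -(Real.pi/m) by ring, Real.cos_neg,
      show (2*(m:ℝ)+(-1)) * (Real.pi/m) = 2*Real.pi - Real.pi/m by field_simp; ring,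
      Real.cos_sub, Real.cos_two_pi, Real.sin_two_pi]
    ring)
  calc ∑ j ∈ Finset.range m, sg m (2*j)
      = ∑ j ∈ Finset.range m, sg m (2*j+1+(-1)) := by
        apply Finset.sum_congr rfl; intro j _; congr 1; ring
    _ = 0 := h

lemma sum_sg_odd_sub : ∑ j ∈ Finset.range m, sg m (2*j-1) = 0 := by
  have h := sum_sg hm (-2) (by
    push_cast
    rw [show (-2:ℝ) * (Real.pi/m) = -(2*(Real.pi/m)) by ring, Real.cos_neg,
      show (2*(m:ℝ)+(-2)) * (Real.pi/m) = 2*Real.pi - 2*(Real.pi/m) by field_simp; ring,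
      Real.cos_sub, Real.cos_two_pi, Real.sin_two_pi]
    ring)
  calc ∑ j ∈ Finset.range m, sg m (2*j-1)
      = ∑ j ∈ Finset.range m, sg m (2*j+1+(-2)) := by
        apply Finset.sum_congr rfl; intro j _; congr 1; ring
    _ = 0 := h

end TrigFacts


namespace CoxeterDatum

section Dihedral
variable (D : CoxeterDatum V)
variable {a b : V} (h1 : D.B a a = 1) (h2 : D.B b b = 1)

local notation "SS" => D.su a h1
local notation "TT" => D.su b h2

lemma pair_sq : ∀ u ∈ ({D.su a h1, D.su b h2} : Set (Module.End ℝ V)ˣ), u * u = 1 := by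
  rintro u (rfl | rfl)
  exacts [D.su_sq a h1, D.su_sq b h2]

lemma tval_a : ((TT : (Module.End ℝ V)ˣ) : Module.End ℝ V) a = a - (2 * D.B a b) • b := rfl

lemma sval_b (hsym : D.B a b = D.B b a) :
    ((SS : (Module.End ℝ V)ˣ) : Module.End ℝ V) b = b - (2 * D.B a b) • a := by
  rw [su_apply, hsym]

lemma tval_combo (p q : ℝ) :
    ((TT : (Module.End ℝ V)ˣ) : Module.End ℝ V) (p • a + q • b)
      = p • a + ((-(2 * D.B a b)) * p - q) • b := by
  rw [map_add, map_smul, map_smul, tval_a, su_apply_self]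
  module

lemma sval_combo (hsym : D.B a b = D.B b a) (p q : ℝ) :
    ((SS : (Module.End ℝ V)ˣ) : Module.End ℝ V) (p • a + q • b)
      = ((-(2 * D.B a b)) * q - p) • a + q • b := by
  rw [map_add, map_smul, map_smul, sval_b D h1 hsym, su_apply_self]
  module

lemma cone_neg1 (hsym : D.B a b = D.B b a) (hc : D.B a b ≤ -1) (k : ℕ) :
    ∃ p q : ℝ, ((altG SS TT k : (Module.End ℝ V)ˣ) : Module.End ℝ V) a = p • a + q • b ∧
      (if Even k then (q + 1 ≤ p ∧ 0 ≤ q) else (p + 1 ≤ q ∧ 0 ≤ p)) := by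
  induction k with
  | zero =>
    refine ⟨1, 0, by simp, ?_⟩
    rw [if_pos Even.zero]
    norm_num
  | succ k ih =>
    obtain ⟨p, q, hv, hcond⟩ := ih
    rw [altG_succ]
    rcases Nat.even_or_odd k with hk | hk
    · rw [if_pos hk] at hcond
      obtain ⟨hqp, hq0⟩ := hcond
      refine ⟨p, (-(2 * D.B a b)) * p - q, ?_, ?_⟩
      · rw [if_pos (odd_succ_of_even hk), Units.val_mul, Module.End.mul_apply, hv,
          tval_combo]
      · rw [if_neg (by rw [Nat.even_iff]; rw [Nat.even_iff] at hk; omega)]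
        constructor
        · nlinarith
        · linarith
    · rw [if_neg (by rw [Nat.even_iff]; rw [Nat.odd_iff] at hk; omega)] at hcond
      obtain ⟨hpq, hp0⟩ := hcond
      refine ⟨(-(2 * D.B a b)) * q - p, q, ?_, ?_⟩
      · rw [if_neg (by rw [Nat.odd_iff]; rw [Nat.odd_iff] at hk; omega),
          Units.val_mul, Module.End.mul_apply, hv, sval_combo D h1 hsym]
      · rw [if_pos (by rw [Nat.even_iff]; rw [Nat.odd_iff] at hk; omega)]
        constructor
        · nlinarith
        · linarith

section TrigCase
variable {m : ℕ} (hm : 2 ≤ m) (hsym : D.B a b = D.B b a)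
  (hc : D.B a b = -Real.cos (Real.pi / m))

include hm hsym hc

omit hm hsym hc in
lemma B_sub_smul (u v w : V) (c : ℝ) : D.B (u - c • v) w = D.B u w - c * D.B v w := by
  rw [map_sub, map_smul, LinearMap.sub_apply, LinearMap.smul_apply, smul_eq_mul]

lemma st_val_a : (((SS * TT : (Module.End ℝ V)ˣ)) : Module.End ℝ V) a
    = sg m 3 • a + sg m 2 • b := by
  have e : (((SS * TT : (Module.End ℝ V)ˣ)) : Module.End ℝ V) a
      = (a - (2 * D.B a b) • b) - (2 * D.B (a - (2 * D.B a b) • b) a) • a := rfl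
  rw [e, B_sub_smul, h1, ← hsym, sg_three hm, sg_two hm, hc]
  module

lemma st_val_b : (((SS * TT : (Module.End ℝ V)ˣ)) : Module.End ℝ V) b
    = -(sg m 2) • a - sg m 1 • b := by
  have e : (((SS * TT : (Module.End ℝ V)ˣ)) : Module.End ℝ V) b
      = (b - (2 * D.B b b) • b) - (2 * D.B (b - (2 * D.B b b) • b) a) • a := rfl
  rw [e, B_sub_smul, h2, ← hsym, sg_two hm, sg_one hm, hc]
  module

lemma st_pow_formula : ∀ j : ℕ,
    ((((SS * TT)^j : (Module.End ℝ V)ˣ)) : Module.End ℝ V) a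
        = sg m (2*(j:ℤ)+1) • a + sg m (2*(j:ℤ)) • b ∧
    ((((SS * TT)^j : (Module.End ℝ V)ˣ)) : Module.End ℝ V) b
        = -(sg m (2*(j:ℤ))) • a - sg m (2*(j:ℤ)-1) • b := by
  intro j
  induction j with
  | zero =>
    constructor
    · show a = sg m (2*(0:ℤ)+1) • a + sg m (2*(0:ℤ)) • b
      norm_num [sg_one hm, sg_zero]
    · show b = -(sg m (2*(0:ℤ))) • a - sg m (2*(0:ℤ)-1) • b
      norm_num [sg_neg_one hm, sg_zero]
  | succ j ih =>
    obtain ⟨iha, ihb⟩ := ih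
    have key1 : sg m (2*((j:ℤ)+1)+1) = sg m 3 * sg m (2*(j:ℤ)+1) - sg m 2 * sg m (2*(j:ℤ)) := by
      have h := sg_id hm 3 (2*(j:ℤ)+1)
      rw [show (3:ℤ) + (2*(j:ℤ)+1) - 1 = 2*((j:ℤ)+1)+1 by ring,
        show (3:ℤ)-1 = 2 by ring, show 2*(j:ℤ)+1-1 = 2*(j:ℤ) by ring] at h
      linarith
    have key2 : sg m (2*((j:ℤ)+1)) = sg m 2 * sg m (2*(j:ℤ)+1) - sg m 1 * sg m (2*(j:ℤ)) := by
      have h := sg_id hm 2 (2*(j:ℤ)+1)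
      rw [show (2:ℤ) + (2*(j:ℤ)+1) - 1 = 2*((j:ℤ)+1) by ring,
        show (2:ℤ)-1 = 1 by ring, show 2*(j:ℤ)+1-1 = 2*(j:ℤ) by ring] at h
      linarith
    have key3 : sg m (2*((j:ℤ)+1)) = sg m 3 * sg m (2*(j:ℤ)) - sg m 2 * sg m (2*(j:ℤ)-1) := by
      have h := sg_id hm 3 (2*(j:ℤ))
      rw [show (3:ℤ) + (2*(j:ℤ)) - 1 = 2*((j:ℤ)+1) by ring,
        show (3:ℤ)-1 = 2 by ring] at h
      linarith
    have key4 : sg m (2*((j:ℤ)+1)-1) = sg m 2 * sg m (2*(j:ℤ)) - sg m 1 * sg m (2*(j:ℤ)-1) := by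
      have h := sg_id hm 2 (2*(j:ℤ))
      rw [show (2:ℤ) + (2*(j:ℤ)) - 1 = 2*((j:ℤ)+1)-1 by ring,
        show (2:ℤ)-1 = 1 by ring] at h
      linarith
    have hcast : ((j+1 : ℕ) : ℤ) = (j:ℤ)+1 := by push_cast; ring
    rw [pow_succ']
    constructor
    · rw [Units.val_mul, Module.End.mul_apply, iha, map_add, map_smul, map_smul,
        st_val_a D h1 h2 hm hsym hc, st_val_b D h1 h2 hm hsym hc, hcast, key1, key2]
      module
    · rw [Units.val_mul, Module.End.mul_apply, ihb, map_sub, map_smul, map_smul,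
        st_val_a D h1 h2 hm hsym hc, st_val_b D h1 h2 hm hsym hc, hcast, key3, key4]
      module

omit hm hsym hc in
lemma st_gx (x : V) : (((SS * TT : (Module.End ℝ V)ˣ)) : Module.End ℝ V) x
    = x + (-(2*D.B x a) + 4*(D.B x b)*(D.B b a)) • a + (-(2*D.B x b)) • b := by
  have e : (((SS * TT : (Module.End ℝ V)ˣ)) : Module.End ℝ V) x
      = (x - (2 * D.B x b) • b) - (2 * D.B (x - (2 * D.B x b) • b) a) • a := rfl
  rw [e, B_sub_smul]
  module

lemma st_pow_m : ((SS * TT)^m : (Module.End ℝ V)ˣ) = 1 := by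
  apply Units.ext
  rw [Units.val_pow_eq_pow_val]
  apply LinearMap.ext
  intro x
  set g : Module.End ℝ V := ((SS * TT : (Module.End ℝ V)ˣ) : Module.End ℝ V) with hg
  show (g ^ m) x = (1 : Module.End ℝ V) x
  rw [Module.End.one_apply]
  set α : ℝ := -(2*D.B x a) + 4*(D.B x b)*(D.B b a) with hα
  set β : ℝ := -(2*D.B x b) with hβ
  have epow : ∀ j : ℕ, (g^j) = (((SS * TT)^j : (Module.End ℝ V)ˣ) : Module.End ℝ V) := by
    intro j; rw [Units.val_pow_eq_pow_val]
  have key : ∀ j : ℕ, (g^(j+1)) x - (g^j) x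
      = (α * sg m (2*(j:ℤ)+1) - β * sg m (2*(j:ℤ))) • a
        + (α * sg m (2*(j:ℤ)) - β * sg m (2*(j:ℤ)-1)) • b := by
    intro j
    have e1 : (g^(j+1)) x = (g^j) (g x) := by rw [pow_succ, Module.End.mul_apply]
    obtain ⟨fa, fb⟩ := st_pow_formula D h1 h2 hm hsym hc j
    rw [e1, hg, st_gx D h1 h2, ← hα, ← hβ, map_add, map_add, map_smul, map_smul,
      ← hg, epow j, fa, fb]
    module
  have tele := Finset.sum_range_sub (f := fun j => (g^j) x) (n := m)
  have sum0 : ∑ j ∈ Finset.range m, ((g^(j+1)) x - (g^j) x) = 0 := by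
    rw [Finset.sum_congr rfl (fun j _ => key j), Finset.sum_add_distrib,
      ← Finset.sum_smul, ← Finset.sum_smul, Finset.sum_sub_distrib, Finset.sum_sub_distrib,
      ← Finset.mul_sum, ← Finset.mul_sum, ← Finset.mul_sum, ← Finset.mul_sum,
      sum_sg_odd hm, sum_sg_even hm, sum_sg_odd_sub hm]
    simp
  rw [Finset.sum_congr rfl (fun j _ => rfl)] at sum0
  have hfinal := tele
  rw [sum0] at hfinal
  have : (g^0) x = x := by rw [pow_zero, Module.End.one_apply]
  rw [this] at hfinal
  exact sub_eq_zero.mp hfinal.symm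
lemma alt_formula : ∀ k : ℕ,
    ((altG (D.su a h1) (D.su b h2) k : (Module.End ℝ V)ˣ) : Module.End ℝ V) a
      = if Even k then sg m ((k:ℤ)+1) • a + sg m (k:ℤ) • b
        else sg m (k:ℤ) • a + sg m ((k:ℤ)+1) • b := by
  intro k
  induction k with
  | zero =>
    rw [if_pos Even.zero]
    show a = sg m ((0:ℤ)+1) • a + sg m (0:ℤ) • b
    norm_num [sg_one hm, sg_zero]
  | succ k ih =>
    have hcast : ((k+1:ℕ):ℤ) = (k:ℤ)+1 := by push_cast; ring
    have hrec := sg_rec hm ((k:ℤ)+1)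
    rw [show (k:ℤ)+1-1 = (k:ℤ) by ring] at hrec
    rw [altG_succ]
    rcases Nat.even_or_odd k with hk | hk
    · rw [if_pos hk] at ih
      rw [if_pos (odd_succ_of_even hk),
        if_neg (by rw [Nat.even_iff]; rw [Nat.even_iff] at hk; omega),
        Units.val_mul, Module.End.mul_apply, ih, tval_combo, hcast,
        show (k:ℤ)+1+1 = (k:ℤ)+2 by ring, show (k:ℤ)+2 = ((k:ℤ)+1)+1 by ring, hrec, hc]
      module
    · rw [if_neg (by rw [Nat.even_iff]; rw [Nat.odd_iff] at hk; omega)] at ih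
      rw [if_neg (by rw [Nat.odd_iff]; rw [Nat.odd_iff] at hk; omega),
        if_pos (by rw [Nat.even_iff]; rw [Nat.odd_iff] at hk; omega),
        Units.val_mul, Module.End.mul_apply, ih, sval_combo D h1 hsym, hcast,
        show (k:ℤ)+1+1 = (k:ℤ)+2 by ring, show (k:ℤ)+2 = ((k:ℤ)+1)+1 by ring, hrec, hc]
      module

lemma st_braid : altG (D.su a h1) (D.su b h2) m = altG (D.su b h2) (D.su a h1) m :=
  alt_braid (D.su_sq a h1) (D.su_sq b h2) (st_pow_m D h1 h2 hm hsym hc)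


end TrigCase
lemma dihedral_cone (ha : a ∈ D.Pi) (hb : b ∈ D.Pi) (hne : a ≠ b)
    {w2 : (Module.End ℝ V)ˣ}
    (hw2 : w2 ∈ Subgroup.closure ({D.su a h1, D.su b h2} : Set (Module.End ℝ V)ˣ))
    (hlen : glen ({D.su a h1, D.su b h2} : Set (Module.End ℝ V)ˣ) w2
      ≤ glen ({D.su a h1, D.su b h2} : Set (Module.End ℝ V)ˣ) (w2 * D.su a h1)) :
    ∃ p q : ℝ, 0 ≤ p ∧ 0 ≤ q ∧ 0 < p + q ∧
      (w2 : Module.End ℝ V) a = p • a + q • b := by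
  classical
  have hsym := D.symm a ha b hb
  set SP : Set (Module.End ℝ V)ˣ := {D.su a h1, D.su b h2} with hSPdef
  have hSP : ∀ u ∈ SP, u * u = 1 := pair_sq D h1 h2
  have hsmem : D.su a h1 ∈ SP := by left; rfl
  have htmem : D.su b h2 ∈ SP := by right; rfl
  have hss : D.su a h1 * D.su a h1 = 1 := D.su_sq a h1
  have htt : D.su b h2 * D.su b h2 = 1 := D.su_sq b h2
  have haltle : ∀ (x y : (Module.End ℝ V)ˣ), x ∈ SP → y ∈ SP → ∀ k : ℕ,
      glen SP (altG x y k) ≤ k := by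
    intro x y hx hy k
    obtain ⟨l', e1, e2, e3⟩ := altG_word x y k
    exact le_trans
      (glen_le (fun u hu => by rcases e1 u hu with rfl | rfl; exacts [hx, hy]) e2)
      (le_of_eq e3)
  have haltmem : ∀ (x y : (Module.End ℝ V)ˣ), x ∈ SP → y ∈ SP → ∀ k : ℕ,
      altG x y k ∈ Subgroup.closure SP := by
    intro x y hx hy k
    obtain ⟨l', e1, e2, e3⟩ := altG_word x y k
    rw [← e2]
    exact word_mem_closure (fun u hu => by rcases e1 u hu with rfl | rfl; exacts [hx, hy])
  set n := glen SP w2 with hn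
  rcases Nat.eq_zero_or_pos n with hn0 | hnpos
  · have hw1 : w2 = 1 := eq_one_of_glen_zero hSP hw2 (by rw [← hn, hn0])
    refine ⟨1, 0, by norm_num, le_rfl, by norm_num, ?_⟩
    rw [hw1]
    simp
  · obtain ⟨l, hl1, hl2, hl3⟩ := glen_spec hSP hw2
    obtain ⟨k, hk, hcase⟩ := alt_classify hss htt l hl1
    have hkn : k = n := by
      have hnk : n ≤ k := by
        rcases hcase with hc | hc
        · rw [hn, ← hl2, hc]; exact haltle _ _ hsmem htmem k
        · rw [hn, ← hl2, hc]; exact haltle _ _ htmem hsmem k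
      have hkl : k ≤ l.length := hk
      omega
    rw [hkn, hl2] at hcase
    rcases hcase with hw2alt | hw2alt
    · -- w2 = altG s t n, the good case
      rcases D.offdiag a ha b hb hne with ⟨m, hm2, hc⟩ | hcle
      · -- trig case
        have hnm : n < m := by
          by_contra hge
          push_neg at hge
          rcases eq_or_lt_of_le hge with heq | hlt
          · -- m = n
            have hbr := st_braid D h1 h2 hm2 hsym hc
            have e1 : altG (D.su b h2) (D.su a h1) m
                = altG (D.su a h1) (D.su b h2) (m-1) * D.su a h1 := by
              have e0 := alt_succ_right (D.su b h2) (D.su a h1) (m-1)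
              rw [show (m-1)+1 = m from by omega] at e0
              exact e0
            have hw2s : w2 * D.su a h1 = altG (D.su a h1) (D.su b h2) (m-1) := by
              rw [hw2alt, ← heq, hbr, e1, mul_assoc, hss, mul_one]
            have hle2 : glen SP (w2 * D.su a h1) ≤ m - 1 := by
              rw [hw2s]; exact haltle _ _ hsmem htmem (m-1)
            omega
          · -- m < n
            have hadd := alt_add (D.su a h1) (D.su b h2) m (n - m)
            rw [show (n-m)+m = n from by omega] at hadd
            have hbr := st_braid D h1 h2 hm2 hsym hc
            have hgle : glen SP w2 ≤ (n - m - 1) + (m - 1) := by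
              rcases Nat.even_or_odd m with hem | hom
              · have hP : altG (D.su a h1) (D.su b h2) (n-m)
                    = altG (D.su b h2) (D.su a h1) (n-m-1) * D.su b h2 := by
                  have e0 := alt_succ_right (D.su a h1) (D.su b h2) (n-m-1)
                  rw [show (n-m-1)+1 = n-m from by omega] at e0
                  exact e0
                have hC : altG (D.su b h2) (D.su a h1) m
                    = D.su b h2 * altG (D.su b h2) (D.su a h1) (m-1) := by
                  have e0 := altG_succ (D.su b h2) (D.su a h1) (m-1)
                  rw [show (m-1)+1 = m from by omega] at e0
                  rw [e0, if_neg (by rw [Nat.odd_iff]; rw [Nat.even_iff] at hem; omega)]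
                have hw2eq : w2 = altG (D.su b h2) (D.su a h1) (n-m-1)
                    * altG (D.su b h2) (D.su a h1) (m-1) := by
                  rw [hw2alt, hadd, if_pos hem, hbr, hP, hC, mul_assoc,
                    ← mul_assoc (D.su b h2), htt, one_mul]
                rw [hw2eq]
                exact le_trans (glen_mul_le hSP (haltmem _ _ htmem hsmem _)
                  (haltmem _ _ htmem hsmem _))
                  (add_le_add (haltle _ _ htmem hsmem _) (haltle _ _ htmem hsmem _))
              · have hP : altG (D.su b h2) (D.su a h1) (n-m)
                    = altG (D.su a h1) (D.su b h2) (n-m-1) * D.su a h1 := by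
                  have e0 := alt_succ_right (D.su b h2) (D.su a h1) (n-m-1)
                  rw [show (n-m-1)+1 = n-m from by omega] at e0
                  exact e0
                have hC : altG (D.su b h2) (D.su a h1) m
                    = D.su a h1 * altG (D.su b h2) (D.su a h1) (m-1) := by
                  have e0 := altG_succ (D.su b h2) (D.su a h1) (m-1)
                  rw [show (m-1)+1 = m from by omega] at e0
                  rw [e0, if_pos (by rw [Nat.odd_iff]; rw [Nat.odd_iff] at hom; omega)]
                have hw2eq : w2 = altG (D.su a h1) (D.su b h2) (n-m-1)
                    * altG (D.su b h2) (D.su a h1) (m-1) := by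
                  rw [hw2alt, hadd, if_neg (by rw [Nat.even_iff]; rw [Nat.odd_iff] at hom; omega),
                    hbr, hP, hC, mul_assoc, ← mul_assoc (D.su a h1), hss, one_mul]
                rw [hw2eq]
                exact le_trans (glen_mul_le hSP (haltmem _ _ hsmem htmem _)
                  (haltmem _ _ htmem hsmem _))
                  (add_le_add (haltle _ _ hsmem htmem _) (haltle _ _ htmem hsmem _))
            omega
        -- now n < m, use the explicit formula
        have hform := alt_formula D h1 h2 hm2 hsym hc n
        have hcast : ((n:ℤ)+1) = ((n+1:ℕ):ℤ) := by push_cast; ring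
        have hnn : 0 ≤ sg m (n:ℕ) := sg_nat_nonneg hm2 n (by omega)
        have hnn1 : 0 ≤ sg m ((n:ℤ)+1) := by
          rw [hcast]; exact sg_nat_nonneg hm2 (n+1) (by omega)
        have hsum : 0 < sg m ((n:ℤ)+1) + sg m (n:ℕ) := by
          have : 0 < sg m (n:ℕ) := sg_nat_pos hm2 n hnpos hnm
          linarith
        rcases Nat.even_or_odd n with hev | hod
        · rw [if_pos hev] at hform
          exact ⟨sg m ((n:ℤ)+1), sg m (n:ℤ), hnn1, hnn, by linarith,
            by rw [hw2alt, hform]⟩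
        · rw [if_neg (by rw [Nat.even_iff]; rw [Nat.odd_iff] at hod; omega)] at hform
          exact ⟨sg m (n:ℤ), sg m ((n:ℤ)+1), hnn, hnn1, by linarith,
            by rw [hw2alt, hform]⟩
      · -- c ≤ -1 case
        obtain ⟨p, q, hv, hcond⟩ := cone_neg1 D h1 h2 hsym hcle n
        rcases Nat.even_or_odd n with hev | hod
        · rw [if_pos hev] at hcond
          obtain ⟨c1, c2⟩ := hcond
          exact ⟨p, q, by linarith, c2, by linarith, by rw [hw2alt]; exact hv⟩
        · rw [if_neg (by rw [Nat.even_iff]; rw [Nat.odd_iff] at hod; omega)] at hcond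
          obtain ⟨c1, c2⟩ := hcond
          exact ⟨p, q, c2, by linarith, by linarith, by rw [hw2alt]; exact hv⟩
    · -- w2 = altG t s n : contradiction with hlen
      exfalso
      have e1 : altG (D.su b h2) (D.su a h1) n
          = altG (D.su a h1) (D.su b h2) (n-1) * D.su a h1 := by
        have e0 := alt_succ_right (D.su b h2) (D.su a h1) (n-1)
        rw [show (n-1)+1 = n from by omega] at e0
        exact e0
      have hw2s : w2 * D.su a h1 = altG (D.su a h1) (D.su b h2) (n-1) := by
        rw [hw2alt, e1, mul_assoc, hss, mul_one]
      have hle2 : glen SP (w2 * D.su a h1) ≤ n - 1 := by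
        rw [hw2s]; exact haltle _ _ hsmem htmem (n-1)
      omega
end Dihedral
end CoxeterDatum


namespace CoxeterDatum
section Main
variable (D : CoxeterDatum V)

lemma key_pos : ∀ n : ℕ, ∀ w : (Module.End ℝ V)ˣ, w ∈ Subgroup.closure D.simples →
    glen D.simples w = n → ∀ a : V, ∀ ha : a ∈ D.Pi,
    glen D.simples w ≤ glen D.simples (w * D.su a (D.norm_one a ha)) →
    (w : Module.End ℝ V) a ∈ PLC D.Pi := by
  intro n
  induction n using Nat.strong_induction_on with
  | _ n ih =>
  intro w hw hwn a ha hlen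
  by_cases hw1 : w = 1
  · have e : ((w : (Module.End ℝ V)ˣ) : Module.End ℝ V) a = a := by rw [hw1]; simp
    rw [e]
    exact mem_PLC_of_mem ha
  obtain ⟨sb, hsbS, hsblt⟩ := exists_shorten D.simples_sq hw hw1
  obtain ⟨b, hb, rfl⟩ := D.simples_eq_su hsbS
  have hne : a ≠ b := by
    rintro rfl
    have : D.su a (D.norm_one a ha) = D.su a (D.norm_one a hb) := rfl
    rw [← this] at hsblt
    omega
  set s := D.su a (D.norm_one a ha) with hsdef
  set t := D.su b (D.norm_one b hb) with htdef
  set SP : Set (Module.End ℝ V)ˣ := {s, t} with hSPdef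
  have hSPsub : SP ⊆ D.simples := by
    rintro u (rfl | rfl)
    exacts [D.su_mem ha _, D.su_mem hb _]
  have hSP : ∀ u ∈ SP, u * u = 1 := pair_sq D _ _
  have hss : s * s = 1 := D.su_sq a _
  have htt : t * t = 1 := D.su_sq b _
  have hsW : s ∈ Subgroup.closure D.simples := Subgroup.subset_closure (D.su_mem ha _)
  have htW : t ∈ Subgroup.closure D.simples := Subgroup.subset_closure (D.su_mem hb _)
  have hmono : Subgroup.closure SP ≤ Subgroup.closure D.simples := Subgroup.closure_mono hSPsub
  set A : Set ((Module.End ℝ V)ˣ × (Module.End ℝ V)ˣ) :=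
    {p | p.1 ∈ Subgroup.closure D.simples ∧ p.2 ∈ Subgroup.closure SP ∧ w = p.1 * p.2 ∧
      glen D.simples w = glen D.simples p.1 + glen SP p.2} with hAdef
  have ht1 : t ≠ 1 := by
    intro h
    rw [h, mul_one] at hsblt
    omega
  have hglent : glen SP t = 1 := by
    have hle : glen SP t ≤ 1 := glen_le (l := [t]) (by simp [hSPdef]) (by simp)
    have hne0 : glen SP t ≠ 0 := fun h =>
      ht1 (eq_one_of_glen_zero hSP (Subgroup.subset_closure (by right; rfl)) h)
    omega
  have hA1 : ((w * t, t) : _ × _) ∈ A := by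
    refine ⟨mul_mem hw htW, Subgroup.subset_closure (by right; rfl), ?_, ?_⟩
    · rw [mul_assoc, htt, mul_one]
    · show glen D.simples w = glen D.simples (w * t) + glen SP t
      have h1' : glen D.simples w ≤ glen D.simples (w * t) + 1 := by
        have := glen_mul_single_le D.simples_sq (mul_mem hw htW) (hSPsub (by right; rfl))
        calc glen D.simples w = glen D.simples (w * t * t) := by rw [mul_assoc, htt, mul_one]
          _ ≤ glen D.simples (w * t) + 1 := this
      rw [hglent]
      omega
  set M : Set ℕ := {k | ∃ p ∈ A, glen D.simples p.1 = k} with hMdef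
  have hMne : M.Nonempty := ⟨glen D.simples (w * t), (w * t, t), hA1, rfl⟩
  obtain ⟨p, hpA, hpN⟩ := Nat.sInf_mem hMne
  obtain ⟨u, w2⟩ := p
  obtain ⟨huW, hw2W, hdecomp, hlensum⟩ := hpA
  have hNle : sInf M ≤ glen D.simples (w * t) := by
    have hmem : glen D.simples (w * t) ∈ M := ⟨(w * t, t), hA1, rfl⟩
    exact Nat.sInf_le hmem
  dsimp only at hpN huW hw2W hdecomp hlensum
  have huw : glen D.simples u < glen D.simples w := by omega
  -- exchange claims
  have hexch : ∀ r : (Module.End ℝ V)ˣ, r ∈ SP →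
      glen D.simples u ≤ glen D.simples (u * r) := by
    intro r hr
    by_contra hcon
    push_neg at hcon
    have hrr : r * r = 1 := hSP r hr
    have hurW : u * r ∈ Subgroup.closure D.simples := mul_mem huW
      (Subgroup.subset_closure (hSPsub hr))
    have hrw2W : r * w2 ∈ Subgroup.closure SP :=
      mul_mem (Subgroup.subset_closure hr) hw2W
    have hprodeq : w = (u * r) * (r * w2) := by
      rw [hdecomp, mul_assoc, ← mul_assoc r, hrr, one_mul]
    have hchain1 : glen D.simples w ≤ glen D.simples (u * r) + glen SP (r * w2) := by
      calc glen D.simples w = glen D.simples ((u * r) * (r * w2)) := by rw [← hprodeq]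
        _ ≤ glen D.simples (u * r) + glen D.simples (r * w2) :=
            glen_mul_le D.simples_sq hurW (hmono hrw2W)
        _ ≤ glen D.simples (u * r) + glen SP (r * w2) := by
            have := glen_anti hSPsub D.simples_sq hrw2W
            omega
    have hchain2 : glen SP (r * w2) ≤ glen SP w2 + 1 := glen_single_mul_le hSP hw2W hr
    have heq2 : glen D.simples w = glen D.simples (u * r) + glen SP (r * w2) := by omega
    have hmem : ((u * r, r * w2) : _ × _) ∈ A := ⟨hurW, hrw2W, hprodeq, heq2⟩
    have : sInf M ≤ glen D.simples (u * r) := by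
      have hmem2 : glen D.simples (u * r) ∈ M := ⟨(u * r, r * w2), hmem, rfl⟩
      exact Nat.sInf_le hmem2
    omega
  have hus := hexch s (by left; rfl)
  have hut := hexch t (by right; rfl)
  -- dihedral length hypothesis
  have hw2len : glen SP w2 ≤ glen SP (w2 * s) := by
    by_contra hcon
    push_neg at hcon
    have hw2sW : w2 * s ∈ Subgroup.closure SP :=
      mul_mem hw2W (Subgroup.subset_closure (by left; rfl))
    have hchain : glen D.simples (w * s) ≤ glen D.simples u + glen SP (w2 * s) := by
      calc glen D.simples (w * s) = glen D.simples (u * (w2 * s)) := by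
            rw [hdecomp, mul_assoc]
        _ ≤ glen D.simples u + glen D.simples (w2 * s) :=
            glen_mul_le D.simples_sq huW (hmono hw2sW)
        _ ≤ glen D.simples u + glen SP (w2 * s) := by
            have := glen_anti hSPsub D.simples_sq hw2sW
            omega
    omega
  obtain ⟨p', q', hp0, hq0, hpq, hform⟩ :=
    dihedral_cone D (D.norm_one a ha) (D.norm_one b hb) ha hb hne hw2W hw2len
  have hua : ((u : (Module.End ℝ V)ˣ) : Module.End ℝ V) a ∈ PLC D.Pi :=
    ih (glen D.simples u) (by omega) u huW rfl a ha hus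
  have hub : ((u : (Module.End ℝ V)ˣ) : Module.End ℝ V) b ∈ PLC D.Pi :=
    ih (glen D.simples u) (by omega) u huW rfl b hb hut
  have hwa : ((w : (Module.End ℝ V)ˣ) : Module.End ℝ V) a
      = p' • (((u : (Module.End ℝ V)ˣ)) : Module.End ℝ V) a
        + q' • (((u : (Module.End ℝ V)ˣ)) : Module.End ℝ V) b := by
    rw [hdecomp, Units.val_mul, Module.End.mul_apply, hform, map_add, map_smul, map_smul]
  rw [hwa]
  exact combo_mem_PLC hp0 hq0 hpq hua hub

end Main
end CoxeterDatum

/-- Proposition 1.5(ii): `Φ = Φ⁺ ⊎ Φ⁻`. -/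
theorem roots_eq_pos_disjUnion_neg (D : CoxeterDatum V) :
    D.roots = D.posRoots ∪ D.negRoots ∧ Disjoint D.posRoots D.negRoots := by
  constructor
  · apply Set.eq_of_subset_of_subset
    · rintro x ⟨w, hw, a, ha, rfl⟩
      set s := D.su a (D.norm_one a ha) with hsdef
      have hsW : s ∈ D.Wgrp := Subgroup.subset_closure (D.su_mem ha _)
      rcases le_or_gt (glen D.simples w) (glen D.simples (w * s)) with h | h
      · left
        exact ⟨⟨w, hw, a, ha, rfl⟩, D.key_pos _ w hw rfl a ha h⟩
      · right
        have hWs : w * s ∈ D.Wgrp := mul_mem hw hsW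
        have hv : ((w * s : (Module.End ℝ V)ˣ) : Module.End ℝ V) a
            = -((w : Module.End ℝ V) a) := by
          rw [Units.val_mul, Module.End.mul_apply, CoxeterDatum.su_apply_self, map_neg]
        have hlen2 : glen D.simples (w * s)
            ≤ glen D.simples ((w * s) * s) := by
          rw [mul_assoc, D.su_sq, mul_one]
          omega
        have hpos := D.key_pos _ (w * s) hWs rfl a ha hlen2
        refine ⟨⟨w * s, hWs, a, ha, hv.symm ▸ rfl⟩, ?_⟩
        · rw [← hv]
          exact hpos
    · rintro x (hx | hx)
      · exact hx.1
      · obtain ⟨⟨w, hw, a, ha, hxa⟩, _⟩ := hx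
        have hsW : D.su a (D.norm_one a ha) ∈ D.Wgrp :=
          Subgroup.subset_closure (D.su_mem ha _)
        refine ⟨w * D.su a (D.norm_one a ha), mul_mem hw hsW, a, ha, ?_⟩
        rw [Units.val_mul, Module.End.mul_apply, CoxeterDatum.su_apply_self, map_neg, ← hxa,
          neg_neg]
  · rw [Set.disjoint_left]
    rintro x ⟨_, hplc⟩ hneg
    obtain ⟨_, hplc2⟩ := hneg
    have h0 := add_mem_PLC hplc hplc2
    rw [add_neg_cancel] at h0
    exact D.zero_not_plc h0
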